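/- If e ∈ Win_a([p,Q]^ε_a) in the weak spectroscopy energy game G△, then there exists a delayed formula χ ∈ Strat([p,Q]^ε_a, e) with expr^ε(χ) ≤ e. -/

import Mathlib

open Classical

noncomputable section

namespace Spectroscopy

/-! ### Energies and declining energy games -/

/-- Energies: 8-dimensional vectors over `ℕ ∪ {∞}`, ordered componentwise. -/
abbrev Energy : Type := Fin 8 → ℕ∞

/-- The `i`-th unit vector. -/
def unitE (i : Fin 8) : Energy := fun k => if k = i then 1 else 0

/-- The vector with value `v` at position `i` and `0` elsewhere. -/
def onlyAt (i : Fin 8) (v : ℕ∞) : Energy := fun k => if k = i then v else 0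

/-- Components of energy updates: `-1`, `0`, or minimum selection `min_D`.
For the component at position `k`, `minWith D` selects the minimum over the
positions `{k} ∪ D`, so the requirement `k ∈ D` of the paper holds by
construction. -/
inductive UpdComp : Type
  | decr : UpdComp
  | zero : UpdComp
  | minWith (D : Finset (Fin 8)) : UpdComp
deriving DecidableEq

/-- Energy updates. -/
abbrev Update : Type := Fin 8 → UpdComp

/-- Partial application of an update to an energy (`none` when a component
would become negative). -/
def upd (e : Energy) (u : Update) : Option Energy :=
  if ∀ k, u k = UpdComp.decr → e k ≠ 0 then
    some (fun k =>
      match u k with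
      | UpdComp.decr => e k - 1
      | UpdComp.zero => e k
      | UpdComp.minWith D => (insert k D).inf e)
  else none

/-- A declining energy game: positions, a defender predicate (attacker
positions are the non-defender ones), and moves labeled with updates. -/
structure EGame (Pos : Type) where
  defender : Pos → Prop
  move : Pos → Update → Pos → Prop

/-- Attacker winning budgets `Win_a`: at an attacker position some move must
lead to an attacker-won position under the updated energy; at a defender
position every move must (be defined and) lead to an attacker-won position. -/
inductive EGame.Win {Pos : Type} (G : EGame Pos) : Pos → Energy → Prop
  | attack {g : Pos} {u : Update} {g' : Pos} {e e' : Energy} :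
      ¬ G.defender g → G.move g u g' → upd e u = some e' → G.Win g' e' →
      G.Win g e
  | defend {g : Pos} {e : Energy} :
      G.defender g →
      (∀ u g', G.move g u g' → upd e u ≠ none) →
      (∀ u g' e', G.move g u g' → upd e u = some e' → G.Win g' e') →
      G.Win g e

/-! ### Labeled transition systems with silent steps -/

section LTS

variable {Proc Act : Type}

/-- Weak internal steps `↠`: reflexive-transitive closure of `τ`-steps. -/
def Star (Tr : Proc → Act → Proc → Prop) (τ : Act) : Proc → Proc → Prop :=
  Relation.ReflTransGen fun p p' => Tr p τ p'

/-- A process is stable if it has no `τ`-step. -/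
def Stable (Tr : Proc → Act → Proc → Prop) (τ : Act) (p : Proc) : Prop :=
  ∀ p', ¬ Tr p τ p'

/-- Optional step `p →(α) p'`: a real `α`-step, or `α = τ` and `p = p'`. -/
def OptStep (Tr : Proc → Act → Proc → Prop) (τ : Act) (p : Proc) (α : Act) (p' : Proc) : Prop :=
  Tr p α p' ∨ (α = τ ∧ p = p')

/-- Lift of `→a` to sets. -/
def SetStep (Tr : Proc → Act → Proc → Prop) (Q : Set Proc) (a : Act) (Q' : Set Proc) : Prop :=
  Q' = {q' | ∃ q ∈ Q, Tr q a q'}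

/-- Lift of `↠` to sets. -/
def SetStar (Tr : Proc → Act → Proc → Prop) (τ : Act) (Q Q' : Set Proc) : Prop :=
  Q' = {q' | ∃ q ∈ Q, Star Tr τ q q'}

/-- Lift of `→(α)` to sets. -/
def SetOpt (Tr : Proc → Act → Proc → Prop) (τ : Act) (Q : Set Proc) (α : Act)
    (Q' : Set Proc) : Prop :=
  Q' = {q' | ∃ q ∈ Q, OptStep Tr τ q α q'}

end LTS

/-! ### The logic HML_srbb -/

mutual
/-- Formulas `φ` of HML_srbb: `⟨ε⟩χ` or immediate conjunctions `⋀Ψ`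
(conjunctions are indexed by an arbitrary type). `⊤` is the empty conjunction. -/
inductive Formula (Act : Type) (τ : Act) : Type 1
  | delayed : DFormula Act τ → Formula Act τ
  | conj : (I : Type) → (I → Conjunct Act τ) → Formula Act τ

/-- Delayed formulas `χ`: observations `⟨a⟩φ` (with `a ≠ τ`), standard
conjunctions `⋀Ψ`, stable conjunctions `⋀({¬⟨τ⟩⊤} ∪ Ψ)`, and branching
conjunctions `⋀({(α)φ} ∪ Ψ)`. -/
inductive DFormula (Act : Type) (τ : Act) : Type 1
  | obs : (a : Act) → a ≠ τ → Formula Act τ → DFormula Act τ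
  | conj : (I : Type) → (I → Conjunct Act τ) → DFormula Act τ
  | stableConj : (I : Type) → (I → Conjunct Act τ) → DFormula Act τ
  | branchConj : (α : Act) → Formula Act τ → (I : Type) → (I → Conjunct Act τ) → DFormula Act τ

/-- Conjuncts `ψ`: positive `⟨ε⟩χ` or negative `¬⟨ε⟩χ`. -/
inductive Conjunct (Act : Type) (τ : Act) : Type 1
  | pos : DFormula Act τ → Conjunct Act τ
  | neg : DFormula Act τ → Conjunct Act τ
end

section Semantics

variable {Proc Act : Type}

mutual
/-- Semantics `⟦φ⟧`. -/
def Sat (Tr : Proc → Act → Proc → Prop) (τ : Act) (p : Proc) : Formula Act τ → Prop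
  | .delayed χ => ∃ p', Star Tr τ p p' ∧ SatD Tr τ p' χ
  | .conj _ ps => ∀ i, SatC Tr τ p (ps i)

/-- Semantics `⟦χ⟧^ε` of delayed formulas. -/
def SatD (Tr : Proc → Act → Proc → Prop) (τ : Act) (p : Proc) : DFormula Act τ → Prop
  | .obs a _ φ => ∃ p', Tr p a p' ∧ Sat Tr τ p' φ
  | .conj _ ps => ∀ i, SatC Tr τ p (ps i)
  | .stableConj _ ps => Stable Tr τ p ∧ ∀ i, SatC Tr τ p (ps i)
  | .branchConj α φ _ ps =>
      (∃ p', OptStep Tr τ p α p' ∧ Sat Tr τ p' φ) ∧ ∀ i, SatC Tr τ p (ps i)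

/-- Semantics `⟦ψ⟧^∧` of conjuncts. -/
def SatC (Tr : Proc → Act → Proc → Prop) (τ : Act) (p : Proc) : Conjunct Act τ → Prop
  | .pos χ => ∃ p', Star Tr τ p p' ∧ SatD Tr τ p' χ
  | .neg χ => ¬ ∃ p', Star Tr τ p p' ∧ SatD Tr τ p' χ
end

/-- `φ` distinguishes `p` from the set `Q`. -/
def Distinguishes (Tr : Proc → Act → Proc → Prop) (τ : Act) (φ : Formula Act τ)
    (p : Proc) (Q : Set Proc) : Prop :=
  Sat Tr τ p φ ∧ ∀ q ∈ Q, ¬ Sat Tr τ q φ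

/-- The delayed formula `χ` distinguishes `p` from the set `Q` w.r.t. `⟦·⟧^ε`. -/
def DistinguishesD (Tr : Proc → Act → Proc → Prop) (τ : Act) (χ : DFormula Act τ)
    (p : Proc) (Q : Set Proc) : Prop :=
  SatD Tr τ p χ ∧ ∀ q ∈ Q, ¬ SatD Tr τ q χ

/-- The conjunct `ψ` distinguishes `p` from `q` w.r.t. `⟦·⟧^∧`. -/
def DistinguishesC (Tr : Proc → Act → Proc → Prop) (τ : Act) (ψ : Conjunct Act τ)
    (p q : Proc) : Prop :=
  SatC Tr τ p ψ ∧ ¬ SatC Tr τ q ψ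

/-- Stability-respecting branching bisimulations: symmetric relations with the
branching-bisimulation transfer property and the stability-respecting
property. -/
def IsSRBBisim (Tr : Proc → Act → Proc → Prop) (τ : Act) (R : Proc → Proc → Prop) : Prop :=
  Symmetric R ∧
  (∀ p q, R p q → ∀ α p', Tr p α p' →
    (α = τ ∧ R p' q) ∨
      ∃ q' q'', Star Tr τ q q' ∧ Tr q' α q'' ∧ R p q' ∧ R p' q'') ∧
  (∀ p q, R p q → Stable Tr τ p →
    ∃ q', Star Tr τ q q' ∧ Stable Tr τ q' ∧ R p q')

end Semantics

/-! ### Expressiveness prices -/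

section Expr

variable {Act : Type} {τ : Act}

mutual
/-- Expressiveness price `expr` of formulas. -/
def exprF : Formula Act τ → Energy
  | .delayed χ => exprE χ
  | .conj I ps => ⨆ _ : Nonempty I, ((unitE 4 + unitE 2) + ⨆ i, exprC (ps i))

/-- Expressiveness price `expr^ε` of delayed formulas. -/
def exprE : DFormula Act τ → Energy
  | .obs _ _ φ => unitE 0 + exprF φ
  | .conj I ps => ⨆ _ : Nonempty I, (unitE 2 + ⨆ i, exprC (ps i))
  | .stableConj _ ps => unitE 3 + ⨆ i, exprC (ps i)
  | .branchConj _ φ _ ps =>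
      (unitE 1 + unitE 2) +
        (((unitE 0 + exprF φ) ⊔ onlyAt 5 (1 + exprF φ 0)) ⊔ ⨆ i, exprC (ps i))

/-- Expressiveness price `expr^∧` of conjuncts. -/
def exprC : Conjunct Act τ → Energy
  | .pos χ => exprE χ ⊔ onlyAt 5 (exprE χ 0)
  | .neg χ => (unitE 7 + exprE χ) ⊔ onlyAt 6 (exprE χ 0)
end

end Expr

/-! ### The weak spectroscopy energy game -/

/-- Positions of the weak spectroscopy game. -/
inductive GPos (Proc Act : Type) : Type
  | att (p : Proc) (Q : Set Proc)                                 -- `[p,Q]_a`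
  | attD (p : Proc) (Q : Set Proc)                                -- `[p,Q]^ε_a`
  | attC (p q : Proc)                                             -- `[p,q]^∧_a`
  | attB (p : Proc) (Q : Set Proc)                                -- `[p,Q]^η_a`
  | defC (p : Proc) (Q : Set Proc)                                -- `(p,Q)_d`
  | defS (p : Proc) (Q : Set Proc)                                -- `(p,Q)^s_d`
  | defB (p : Proc) (α : Act) (p' : Proc) (Q Qa : Set Proc)       -- `(p,α,p',Q,Qa)^η_d`

/-- The zero update. -/
def zeroU : Update := fun _ => UpdComp.zero

/-- The update `-ê_i`. -/
def decU (i : Fin 8) : Update := fun k => if k = i then UpdComp.decr else UpdComp.zero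

/-- The update `(min_{1,6},0,0,0,0,0,0,0)`. -/
def minU16 : Update := fun k => if k = 0 then UpdComp.minWith {5} else UpdComp.zero

/-- The update `(min_{1,7},0,0,0,0,0,0,-1)`. -/
def minU17dec8 : Update := fun k =>
  if k = 0 then UpdComp.minWith {6} else if k = 7 then UpdComp.decr else UpdComp.zero

/-- The update `(0,-1,-1,0,0,0,0,0)`. -/
def dec23 : Update := fun k => if k = 1 ∨ k = 2 then UpdComp.decr else UpdComp.zero

/-- The update `(min_{1,6},-1,-1,0,0,0,0,0)`. -/
def minU16dec23 : Update := fun k =>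
  if k = 0 then UpdComp.minWith {5}
  else if k = 1 ∨ k = 2 then UpdComp.decr else UpdComp.zero

section Game

variable {Proc Act : Type}

/-- Moves of the weak spectroscopy game. -/
inductive GMove (Tr : Proc → Act → Proc → Prop) (τ : Act) :
    GPos Proc Act → Update → GPos Proc Act → Prop
  | delay {p : Proc} {Q Q' : Set Proc} :
      SetStar Tr τ Q Q' →
      GMove Tr τ (.att p Q) zeroU (.attD p Q')
  | procrastination {p p' : Proc} {Q : Set Proc} :
      Tr p τ p' → p ≠ p' →
      GMove Tr τ (.attD p Q) zeroU (.attD p' Q)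
  | observation {p p' : Proc} {a : Act} {Q Q' : Set Proc} :
      Tr p a p' → a ≠ τ → SetStep Tr Q a Q' →
      GMove Tr τ (.attD p Q) (decU 0) (.att p' Q')
  | finishing {p : Proc} :
      GMove Tr τ (.att p ∅) zeroU (.defC p ∅)
  | immediateConj {p : Proc} {Q : Set Proc} :
      Q ≠ ∅ →
      GMove Tr τ (.att p Q) (decU 4) (.defC p Q)
  | lateConj {p : Proc} {Q : Set Proc} :
      GMove Tr τ (.attD p Q) zeroU (.defC p Q)
  | conjAnswer {p q : Proc} {Q : Set Proc} :
      q ∈ Q →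
      GMove Tr τ (.defC p Q) (decU 2) (.attC p q)
  | posConjunct {p q : Proc} {Q : Set Proc} :
      SetStar Tr τ {q} Q →
      GMove Tr τ (.attC p q) minU16 (.attD p Q)
  | negConjunct {p q : Proc} {Q : Set Proc} :
      SetStar Tr τ {p} Q → p ≠ q →
      GMove Tr τ (.attC p q) minU17dec8 (.attD q Q)
  | stableConj {p : Proc} {Q : Set Proc} :
      Stable Tr τ p →
      GMove Tr τ (.attD p Q) zeroU (.defS p {q ∈ Q | Stable Tr τ q})
  | conjStableAnswer {p q : Proc} {Q : Set Proc} :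
      q ∈ Q →
      GMove Tr τ (.defS p Q) (decU 3) (.attC p q)
  | stableFinishing {p : Proc} :
      GMove Tr τ (.defS p ∅) (decU 3) (.defC p ∅)
  | branchConj {p p' : Proc} {α : Act} {Q Qa : Set Proc} :
      OptStep Tr τ p α p' → Qa ⊆ Q →
      GMove Tr τ (.attD p Q) zeroU (.defB p α p' (Q \ Qa) Qa)
  | branchAnswer {p p' q : Proc} {α : Act} {Q Qa : Set Proc} :
      q ∈ Q →
      GMove Tr τ (.defB p α p' Q Qa) dec23 (.attC p q)
  | branchObservation {p p' : Proc} {α : Act} {Q Qa Q' : Set Proc} :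
      SetOpt Tr τ Qa α Q' →
      GMove Tr τ (.defB p α p' Q Qa) minU16dec23 (.attB p' Q')
  | branchAccounting {p : Proc} {Q : Set Proc} :
      GMove Tr τ (.attB p Q) (decU 0) (.att p Q)

/-- Defender positions of the weak spectroscopy game. -/
def isDefender : GPos Proc Act → Prop
  | .defC _ _ => True
  | .defS _ _ => True
  | .defB _ _ _ _ _ => True
  | _ => False

/-- The weak spectroscopy energy game `G△`. -/
def specGame (Tr : Proc → Act → Proc → Prop) (τ : Act) : EGame (GPos Proc Act) where
  defender := isDefender
  move := GMove Tr τ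

end Game

/-! ### Strategy formulas -/

section Strat

variable {Proc Act : Type}

mutual
/-- Attacker strategy formulas (formula sort). -/
inductive StratF (Tr : Proc → Act → Proc → Prop) (τ : Act) :
    GPos Proc Act → Energy → Formula Act τ → Prop
  | delay {p : Proc} {Q Q' : Set Proc} {u : Update} {e e' : Energy} {χ : DFormula Act τ} :
      GMove Tr τ (.att p Q) u (.attD p Q') →
      upd e u = some e' →
      (specGame Tr τ).Win (.attD p Q') e' →
      StratD Tr τ (.attD p Q') e' χ →
      StratF Tr τ (.att p Q) e (.delayed χ)
  | immediateConj {p : Proc} {Q : Set Proc} {u : Update} {e e' : Energy}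
      {I : Type} {ps : I → Conjunct Act τ} :
      GMove Tr τ (.att p Q) u (.defC p Q) →
      upd e u = some e' →
      (specGame Tr τ).Win (.defC p Q) e' →
      StratD Tr τ (.defC p Q) e' (.conj I ps) →
      StratF Tr τ (.att p Q) e (.conj I ps)

/-- Attacker strategy formulas (delayed-formula sort). -/
inductive StratD (Tr : Proc → Act → Proc → Prop) (τ : Act) :
    GPos Proc Act → Energy → DFormula Act τ → Prop
  | procrastination {p p' : Proc} {Q : Set Proc} {u : Update} {e e' : Energy}
      {χ : DFormula Act τ} :
      GMove Tr τ (.attD p Q) u (.attD p' Q) →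
      upd e u = some e' →
      (specGame Tr τ).Win (.attD p' Q) e' →
      StratD Tr τ (.attD p' Q) e' χ →
      StratD Tr τ (.attD p Q) e χ
  | observation {p p' : Proc} {a : Act} {Q Q' : Set Proc} {u : Update} {e e' : Energy}
      {φ : Formula Act τ} (ha : a ≠ τ) :
      GMove Tr τ (.attD p Q) u (.att p' Q') →
      Tr p a p' → SetStep Tr Q a Q' →
      upd e u = some e' →
      (specGame Tr τ).Win (.att p' Q') e' →
      StratF Tr τ (.att p' Q') e' φ →
      StratD Tr τ (.attD p Q) e (.obs a ha φ)
  | lateConj {p : Proc} {Q : Set Proc} {u : Update} {e e' : Energy} {χ : DFormula Act τ} :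
      GMove Tr τ (.attD p Q) u (.defC p Q) →
      upd e u = some e' →
      (specGame Tr τ).Win (.defC p Q) e' →
      StratD Tr τ (.defC p Q) e' χ →
      StratD Tr τ (.attD p Q) e χ
  | stable {p : Proc} {Q Q' : Set Proc} {u : Update} {e e' : Energy} {χ : DFormula Act τ} :
      GMove Tr τ (.attD p Q) u (.defS p Q') →
      upd e u = some e' →
      (specGame Tr τ).Win (.defS p Q') e' →
      StratD Tr τ (.defS p Q') e' χ →
      StratD Tr τ (.attD p Q) e χ
  | branch {p p' : Proc} {α : Act} {Q Q' Qa : Set Proc} {u : Update} {e e' : Energy}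
      {χ : DFormula Act τ} :
      GMove Tr τ (.attD p Q) u (.defB p α p' Q' Qa) →
      upd e u = some e' →
      (specGame Tr τ).Win (.defB p α p' Q' Qa) e' →
      StratD Tr τ (.defB p α p' Q' Qa) e' χ →
      StratD Tr τ (.attD p Q) e χ
  | conj {p : Proc} {Q : Set Proc} {e : Energy}
      (us : {q // q ∈ Q} → Update) (es : {q // q ∈ Q} → Energy)
      (ψs : {q // q ∈ Q} → Conjunct Act τ) :
      (∀ qq : {q // q ∈ Q}, GMove Tr τ (.defC p Q) (us qq) (.attC p qq.1)) →
      (∀ qq : {q // q ∈ Q}, upd e (us qq) = some (es qq)) →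
      (∀ qq : {q // q ∈ Q}, (specGame Tr τ).Win (.attC p qq.1) (es qq)) →
      (∀ qq : {q // q ∈ Q}, StratC Tr τ (.attC p qq.1) (es qq) (ψs qq)) →
      StratD Tr τ (.defC p Q) e (.conj {q // q ∈ Q} ψs)
  | stableConj {p : Proc} {Q : Set Proc} {e : Energy}
      (hne : Q.Nonempty)
      (us : {q // q ∈ Q} → Update) (es : {q // q ∈ Q} → Energy)
      (ψs : {q // q ∈ Q} → Conjunct Act τ) :
      (∀ qq : {q // q ∈ Q}, GMove Tr τ (.defS p Q) (us qq) (.attC p qq.1)) →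
      (∀ qq : {q // q ∈ Q}, upd e (us qq) = some (es qq)) →
      (∀ qq : {q // q ∈ Q}, (specGame Tr τ).Win (.attC p qq.1) (es qq)) →
      (∀ qq : {q // q ∈ Q}, StratC Tr τ (.attC p qq.1) (es qq) (ψs qq)) →
      StratD Tr τ (.defS p Q) e (.stableConj {q // q ∈ Q} ψs)
  | stableFinish {p : Proc} {u : Update} {e e' : Energy} :
      GMove Tr τ (.defS p ∅) u (.defC p ∅) →
      upd e u = some e' →
      (specGame Tr τ).Win (.defC p (∅ : Set Proc)) e' →
      StratD Tr τ (.defS p ∅) e (.stableConj Empty fun x => x.elim)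
  | branchConj {p p' : Proc} {α : Act} {Q Qa Q' : Set Proc} {ua ua' : Update}
      {e e1 ea : Energy} {φa : Formula Act τ}
      (us : {q // q ∈ Q} → Update) (es : {q // q ∈ Q} → Energy)
      (ψs : {q // q ∈ Q} → Conjunct Act τ) :
      GMove Tr τ (.defB p α p' Q Qa) ua (.attB p' Q') →
      GMove Tr τ (.attB p' Q') ua' (.att p' Q') →
      upd e ua = some e1 →
      upd e1 ua' = some ea →
      (specGame Tr τ).Win (.att p' Q') ea →
      StratF Tr τ (.att p' Q') ea φa →
      (∀ qq : {q // q ∈ Q}, GMove Tr τ (.defB p α p' Q Qa) (us qq) (.attC p qq.1)) →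
      (∀ qq : {q // q ∈ Q}, upd e (us qq) = some (es qq)) →
      (∀ qq : {q // q ∈ Q}, (specGame Tr τ).Win (.attC p qq.1) (es qq)) →
      (∀ qq : {q // q ∈ Q}, StratC Tr τ (.attC p qq.1) (es qq) (ψs qq)) →
      StratD Tr τ (.defB p α p' Q Qa) e (.branchConj α φa {q // q ∈ Q} ψs)

/-- Attacker strategy formulas (conjunct sort). -/
inductive StratC (Tr : Proc → Act → Proc → Prop) (τ : Act) :
    GPos Proc Act → Energy → Conjunct Act τ → Prop
  | pos {p q : Proc} {Q' : Set Proc} {u : Update} {e e' : Energy} {χ : DFormula Act τ} :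
      GMove Tr τ (.attC p q) u (.attD p Q') →
      upd e u = some e' →
      (specGame Tr τ).Win (.attD p Q') e' →
      StratD Tr τ (.attD p Q') e' χ →
      StratC Tr τ (.attC p q) e (.pos χ)
  | neg {p q : Proc} {P' : Set Proc} {u : Update} {e e' : Energy} {χ : DFormula Act τ} :
      GMove Tr τ (.attC p q) u (.attD q P') →
      upd e u = some e' →
      (specGame Tr τ).Win (.attD q P') e' →
      StratD Tr τ (.attD q P') e' χ →
      StratC Tr τ (.attC p q) e (.neg χ)
end

end Strat


/-! ### Auxiliary lemmas for the proof -/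

section Aux

lemma upd_some_cond {e e' : Energy} {u : Update} (h : upd e u = some e') :
    ∀ k, u k = UpdComp.decr → e k ≠ 0 := by
  unfold upd at h; split at h
  · assumption
  · simp at h

lemma upd_some_apply {e e' : Energy} {u : Update} (h : upd e u = some e') (k : Fin 8) :
    e' k = match u k with
      | UpdComp.decr => e k - 1
      | UpdComp.zero => e k
      | UpdComp.minWith D => (insert k D).inf e := by
  unfold upd at h; split at h
  · cases h; rfl
  · simp at h

lemma upd_some_le {e e' : Energy} {u : Update} (h : upd e u = some e') : e' ≤ e := by
  intro k
  rw [upd_some_apply h k]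
  cases hk : u k with
  | decr => exact tsub_le_self
  | zero => exact le_rfl
  | minWith D => exact Finset.inf_le (Finset.mem_insert_self k D)

lemma upd_zeroU_eq {e e' : Energy} (h : upd e zeroU = some e') : e' = e := by
  funext k
  rw [upd_some_apply h k]; rfl

lemma one_add_le_of_ne {x b : ℕ∞} (hb : b ≠ 0) (h : x ≤ b - 1) : 1 + x ≤ b :=
  calc 1 + x ≤ 1 + (b - 1) := add_le_add (le_refl 1) h
    _ = b := by rw [add_comm, tsub_add_cancel_of_le (ENat.one_le_iff_ne_zero.mpr hb)]

lemma exprF_conj_le {Act : Type} {τ : Act} (I : Type) (ps : I → Conjunct Act τ) :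
    exprF (τ := τ) (.conj I ps) ≤ unitE 4 + exprE (.conj I ps) := by
  by_cases hI : Nonempty I
  · rw [exprF, exprE, iSup_pos hI, iSup_pos hI, add_assoc]
  · rw [exprF, iSup_neg hI]; exact bot_le

end Aux

section Main

variable {Proc Act : Type}

/-- The motive of the big induction over winning budgets. -/
def Motive (Tr : Proc → Act → Proc → Prop) (τ : Act) : GPos Proc Act → Energy → Prop
  | .att p Q, e => ∃ φ : Formula Act τ, StratF Tr τ (.att p Q) e φ ∧ exprF φ ≤ e
  | .attD p Q, e => ∃ χ : DFormula Act τ, StratD Tr τ (.attD p Q) e χ ∧ exprE χ ≤ e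
  | .attC p q, e => ∃ ψ : Conjunct Act τ, StratC Tr τ (.attC p q) e ψ ∧ exprC ψ ≤ e
  | .attB p Q, e => ∃ (ea : Energy) (φ : Formula Act τ),
      upd e (decU 0) = some ea ∧ (specGame Tr τ).Win (.att p Q) ea ∧
      StratF Tr τ (.att p Q) ea φ ∧ exprF φ ≤ ea
  | .defC p Q, e => ∃ ψs : {q // q ∈ Q} → Conjunct Act τ,
      StratD Tr τ (.defC p Q) e (.conj _ ψs) ∧ exprE (DFormula.conj _ ψs) ≤ e
  | .defS p Q, e => ∃ χ : DFormula Act τ, StratD Tr τ (.defS p Q) e χ ∧ exprE χ ≤ e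
  | .defB p α p' Q Qa, e => ∃ χ : DFormula Act τ,
      StratD Tr τ (.defB p α p' Q Qa) e χ ∧ exprE χ ≤ e

theorem master (Tr : Proc → Act → Proc → Prop) (τ : Act) (g : GPos Proc Act) (e : Energy)
    (h : (specGame Tr τ).Win g e) : Motive Tr τ g e := by
  induction h with
  | @attack g u g' e e' hnd hmv hupd hwin ih =>
    have hmv' : GMove Tr τ g u g' := hmv
    cases hmv' with
    | @delay p Q Q' hss =>
      obtain ⟨χ, hχ, hle⟩ := ih
      exact ⟨.delayed χ, StratF.delay (GMove.delay hss) hupd hwin hχ,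
        by rw [show exprF (Formula.delayed χ) = exprE χ from rfl, ← upd_zeroU_eq hupd]; exact hle⟩
    | @procrastination p p' Q htr hne =>
      obtain ⟨χ, hχ, hle⟩ := ih
      exact ⟨χ, StratD.procrastination (GMove.procrastination htr hne) hupd hwin hχ,
        by rw [← upd_zeroU_eq hupd]; exact hle⟩
    | @observation p p' a Q Q' htr ha hss =>
      obtain ⟨φ, hφ, hle⟩ := ih
      refine ⟨.obs a ha φ,
        StratD.observation ha (GMove.observation htr ha hss) htr hss hupd hwin hφ, ?_⟩
      rw [show exprE (DFormula.obs a ha φ) = unitE 0 + exprF φ from rfl]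
      intro k
      rw [Pi.add_apply]
      by_cases hk : k = 0
      · subst hk
        rw [show unitE 0 0 = 1 from by simp [unitE]]
        refine one_add_le_of_ne (upd_some_cond hupd 0 (by simp [decU])) ?_
        have := hle 0
        rwa [upd_some_apply hupd 0, show decU 0 0 = UpdComp.decr from by simp [decU]] at this
      · rw [show unitE 0 k = 0 from by simp [unitE, hk], zero_add]
        have := hle k
        rwa [upd_some_apply hupd k,
          show decU 0 k = UpdComp.zero from by simp [decU, hk]] at this
    | @finishing p =>
      obtain ⟨ψs, hstrat, hle⟩ := ih
      refine ⟨.conj _ ψs, StratF.immediateConj GMove.finishing hupd hwin hstrat, ?_⟩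
      have hI : ¬ Nonempty {q // q ∈ (∅ : Set Proc)} := by
        rintro ⟨⟨q, hq⟩⟩; exact hq
      rw [exprF, iSup_neg hI]
      exact bot_le
    | @immediateConj p Q hQ =>
      obtain ⟨ψs, hstrat, hle⟩ := ih
      refine ⟨.conj _ ψs, StratF.immediateConj (GMove.immediateConj hQ) hupd hwin hstrat, ?_⟩
      refine (exprF_conj_le _ _).trans ((add_le_add (le_refl _) hle).trans ?_)
      intro k
      rw [Pi.add_apply]
      by_cases hk : k = 4
      · subst hk
        rw [show unitE 4 4 = 1 from by simp [unitE]]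
        refine one_add_le_of_ne (upd_some_cond hupd 4 (by simp [decU])) ?_
        rw [upd_some_apply hupd 4, show decU 4 4 = UpdComp.decr from by simp [decU]]
      · rw [show unitE 4 k = 0 from by simp [unitE, hk], zero_add,
          upd_some_apply hupd k, show decU 4 k = UpdComp.zero from by simp [decU, hk]]
    | @lateConj p Q =>
      obtain ⟨ψs, hstrat, hle⟩ := ih
      exact ⟨.conj _ ψs, StratD.lateConj GMove.lateConj hupd hwin hstrat,
        by rw [← upd_zeroU_eq hupd]; exact hle⟩
    | @conjAnswer p q Q hq => simp [specGame, isDefender] at hnd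
    | @posConjunct p q Q' hss =>
      obtain ⟨χ, hχ, hle⟩ := ih
      refine ⟨.pos χ, StratC.pos (GMove.posConjunct hss) hupd hwin hχ, ?_⟩
      rw [show exprC (Conjunct.pos χ) = exprE χ ⊔ onlyAt 5 (exprE χ 0) from rfl]
      intro k
      rw [Pi.sup_apply]
      refine sup_le ((hle k).trans (upd_some_le hupd k)) ?_
      by_cases hk : k = 5
      · subst hk
        rw [show onlyAt 5 (exprE χ 0) 5 = exprE χ 0 from by simp [onlyAt]]
        refine (hle 0).trans ?_
        rw [upd_some_apply hupd 0,
          show minU16 0 = UpdComp.minWith {5} from by simp [minU16]]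
        exact Finset.inf_le (by simp)
      · rw [show onlyAt 5 (exprE χ 0) k = 0 from by simp [onlyAt, hk]]
        exact zero_le
    | @negConjunct p q P' hss hpq =>
      obtain ⟨χ, hχ, hle⟩ := ih
      refine ⟨.neg χ, StratC.neg (GMove.negConjunct hss hpq) hupd hwin hχ, ?_⟩
      rw [show exprC (Conjunct.neg χ) = (unitE 7 + exprE χ) ⊔ onlyAt 6 (exprE χ 0) from rfl]
      intro k
      rw [Pi.sup_apply, Pi.add_apply]
      refine sup_le ?_ ?_
      · by_cases hk : k = 7
        · subst hk
          rw [show unitE 7 7 = 1 from by simp [unitE]]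
          refine one_add_le_of_ne (upd_some_cond hupd 7 (by simp [minU17dec8])) ?_
          have := hle 7
          rwa [upd_some_apply hupd 7,
            show minU17dec8 7 = UpdComp.decr from by simp [minU17dec8]] at this
        · rw [show unitE 7 k = 0 from by simp [unitE, hk], zero_add]
          exact (hle k).trans (upd_some_le hupd k)
      · by_cases hk : k = 6
        · subst hk
          rw [show onlyAt 6 (exprE χ 0) 6 = exprE χ 0 from by simp [onlyAt]]
          refine (hle 0).trans ?_
          rw [upd_some_apply hupd 0,
            show minU17dec8 0 = UpdComp.minWith {6} from by simp [minU17dec8]]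
          exact Finset.inf_le (by simp)
        · rw [show onlyAt 6 (exprE χ 0) k = 0 from by simp [onlyAt, hk]]
          exact zero_le
    | @stableConj p Q hstable =>
      obtain ⟨χ, hχ, hle⟩ := ih
      exact ⟨χ, StratD.stable (GMove.stableConj hstable) hupd hwin hχ,
        by rw [← upd_zeroU_eq hupd]; exact hle⟩
    | @conjStableAnswer p q Q hq => simp [specGame, isDefender] at hnd
    | @stableFinishing p => simp [specGame, isDefender] at hnd
    | @branchConj p p' α Q Qa hopt hsub =>
      obtain ⟨χ, hχ, hle⟩ := ih
      exact ⟨χ, StratD.branch (GMove.branchConj hopt hsub) hupd hwin hχ,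
        by rw [← upd_zeroU_eq hupd]; exact hle⟩
    | @branchAnswer p p' q α Q Qa hq => simp [specGame, isDefender] at hnd
    | @branchObservation p p' α Q Qa Q' hso => simp [specGame, isDefender] at hnd
    | @branchAccounting p Q =>
      obtain ⟨φ, hφ, hle⟩ := ih
      exact ⟨e', φ, hupd, hwin, hφ, hle⟩
  | @defend g e hd hdef hwin ih =>
    cases g with
    | att p Q => simp [specGame, isDefender] at hd
    | attD p Q => simp [specGame, isDefender] at hd
    | attC p q => simp [specGame, isDefender] at hd
    | attB p Q => simp [specGame, isDefender] at hd
    | defC p Q =>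
      have H : ∀ qq : {q // q ∈ Q}, ∃ (e₂ : Energy) (ψ : Conjunct Act τ),
          upd e (decU 2) = some e₂ ∧ (specGame Tr τ).Win (.attC p qq.1) e₂ ∧
          StratC Tr τ (.attC p qq.1) e₂ ψ ∧ exprC ψ ≤ e₂ := by
        intro qq
        have mv : GMove Tr τ (.defC p Q) (decU 2) (.attC p qq.1) := GMove.conjAnswer qq.2
        obtain ⟨e₂, h₂⟩ := Option.ne_none_iff_exists'.mp (hdef _ _ mv)
        obtain ⟨ψ, hψ, hle⟩ := ih _ _ _ mv h₂
        exact ⟨e₂, ψ, h₂, hwin _ _ _ mv h₂, hψ, hle⟩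
      choose es ψs h1 h2 h3 h4 using H
      refine ⟨ψs, StratD.conj (fun _ => decU 2) es ψs
        (fun qq => GMove.conjAnswer qq.2) h1 h2 h3, ?_⟩
      rcases Q.eq_empty_or_nonempty with rfl | ⟨q0, hq0⟩
      · have hI : ¬ Nonempty {q // q ∈ (∅ : Set Proc)} := by rintro ⟨⟨q, hq⟩⟩; exact hq
        rw [exprE, iSup_neg hI]
        exact bot_le
      · have hI : Nonempty {q // q ∈ Q} := ⟨⟨q0, hq0⟩⟩
        rw [exprE, iSup_pos hI]
        intro k
        rw [Pi.add_apply, iSup_apply]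
        have hes : ∀ (qq : {q // q ∈ Q}) (k : Fin 8), exprC (ψs qq) k ≤
            (match decU 2 k with
              | UpdComp.decr => e k - 1
              | UpdComp.zero => e k
              | UpdComp.minWith D => (insert k D).inf e) := by
          intro qq k
          have := h4 qq k
          rwa [upd_some_apply (h1 qq) k] at this
        by_cases hk : k = 2
        · subst hk
          rw [show unitE 2 2 = 1 from by simp [unitE]]
          refine one_add_le_of_ne (upd_some_cond (h1 ⟨q0, hq0⟩) 2 (by simp [decU])) ?_
          refine iSup_le fun qq => ?_
          have := hes qq 2
          rwa [show decU 2 2 = UpdComp.decr from by simp [decU]] at this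
        · rw [show unitE 2 k = 0 from by simp [unitE, hk], zero_add]
          refine iSup_le fun qq => ?_
          have := hes qq k
          rwa [show decU 2 k = UpdComp.zero from by simp [decU, hk]] at this
    | defS p Q =>
      rcases Q.eq_empty_or_nonempty with rfl | hne
      · have mv : GMove Tr τ (.defS p ∅) (decU 3) (.defC p ∅) := GMove.stableFinishing
        obtain ⟨e₂, h₂⟩ := Option.ne_none_iff_exists'.mp (hdef _ _ mv)
        refine ⟨.stableConj Empty fun x => x.elim,
          StratD.stableFinish mv h₂ (hwin _ _ _ mv h₂), ?_⟩
        rw [exprE]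
        intro k
        rw [Pi.add_apply, iSup_apply, iSup_of_empty']
        by_cases hk : k = 3
        · subst hk
          rw [show unitE 3 3 = 1 from by simp [unitE]]
          refine one_add_le_of_ne (upd_some_cond h₂ 3 (by simp [decU])) ?_
          rw [sSup_empty]; exact bot_le
        · rw [show unitE 3 k = 0 from by simp [unitE, hk], zero_add]
          rw [sSup_empty]
          exact bot_le
      · have H : ∀ qq : {q // q ∈ Q}, ∃ (e₂ : Energy) (ψ : Conjunct Act τ),
            upd e (decU 3) = some e₂ ∧ (specGame Tr τ).Win (.attC p qq.1) e₂ ∧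
            StratC Tr τ (.attC p qq.1) e₂ ψ ∧ exprC ψ ≤ e₂ := by
          intro qq
          have mv : GMove Tr τ (.defS p Q) (decU 3) (.attC p qq.1) :=
            GMove.conjStableAnswer qq.2
          obtain ⟨e₂, h₂⟩ := Option.ne_none_iff_exists'.mp (hdef _ _ mv)
          obtain ⟨ψ, hψ, hle⟩ := ih _ _ _ mv h₂
          exact ⟨e₂, ψ, h₂, hwin _ _ _ mv h₂, hψ, hle⟩
        choose es ψs h1 h2 h3 h4 using H
        refine ⟨.stableConj _ ψs, StratD.stableConj hne (fun _ => decU 3) es ψs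
          (fun qq => GMove.conjStableAnswer qq.2) h1 h2 h3, ?_⟩
        rw [exprE]
        intro k
        rw [Pi.add_apply, iSup_apply]
        obtain ⟨q0, hq0⟩ := hne
        have hes : ∀ (qq : {q // q ∈ Q}) (k : Fin 8), exprC (ψs qq) k ≤
            (match decU 3 k with
              | UpdComp.decr => e k - 1
              | UpdComp.zero => e k
              | UpdComp.minWith D => (insert k D).inf e) := by
          intro qq k
          have := h4 qq k
          rwa [upd_some_apply (h1 qq) k] at this
        by_cases hk : k = 3
        · subst hk
          rw [show unitE 3 3 = 1 from by simp [unitE]]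
          refine one_add_le_of_ne (upd_some_cond (h1 ⟨q0, hq0⟩) 3 (by simp [decU])) ?_
          refine iSup_le fun qq => ?_
          have := hes qq 3
          rwa [show decU 3 3 = UpdComp.decr from by simp [decU]] at this
        · rw [show unitE 3 k = 0 from by simp [unitE, hk], zero_add]
          refine iSup_le fun qq => ?_
          have := hes qq k
          rwa [show decU 3 k = UpdComp.zero from by simp [decU, hk]] at this
    | defB p α p' Q Qa =>
      have hso : SetOpt Tr τ Qa α {q' | ∃ q ∈ Qa, OptStep Tr τ q α q'} := rfl
      have mv1 : GMove Tr τ (.defB p α p' Q Qa) minU16dec23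
          (.attB p' {q' | ∃ q ∈ Qa, OptStep Tr τ q α q'}) := GMove.branchObservation hso
      obtain ⟨e1, h1⟩ := Option.ne_none_iff_exists'.mp (hdef _ _ mv1)
      obtain ⟨ea, φa, hea, hwa, hφa, hlea⟩ := ih _ _ _ mv1 h1
      have H : ∀ qq : {q // q ∈ Q}, ∃ (e₂ : Energy) (ψ : Conjunct Act τ),
          upd e dec23 = some e₂ ∧ (specGame Tr τ).Win (.attC p qq.1) e₂ ∧
          StratC Tr τ (.attC p qq.1) e₂ ψ ∧ exprC ψ ≤ e₂ := by
        intro qq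
        have mv : GMove Tr τ (.defB p α p' Q Qa) dec23 (.attC p qq.1) :=
          GMove.branchAnswer qq.2
        obtain ⟨e₂, h₂⟩ := Option.ne_none_iff_exists'.mp (hdef _ _ mv)
        obtain ⟨ψ, hψ, hle⟩ := ih _ _ _ mv h₂
        exact ⟨e₂, ψ, h₂, hwin _ _ _ mv h₂, hψ, hle⟩
      choose es ψs g1 g2 g3 g4 using H
      refine ⟨.branchConj α φa _ ψs,
        StratD.branchConj (fun _ => dec23) es ψs mv1 GMove.branchAccounting h1 hea hwa hφa
          (fun qq => GMove.branchAnswer qq.2) g1 g2 g3, ?_⟩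
      -- price computation
      have he1 : ∀ k : Fin 8, e1 k = (match minU16dec23 k with
          | UpdComp.decr => e k - 1
          | UpdComp.zero => e k
          | UpdComp.minWith D => (insert k D).inf e) := fun k => upd_some_apply h1 k
      have hea' : ∀ k : Fin 8, ea k = (match decU 0 k with
          | UpdComp.decr => e1 k - 1
          | UpdComp.zero => e1 k
          | UpdComp.minWith D => (insert k D).inf e1) := fun k => upd_some_apply hea k
      have hes : ∀ (qq : {q // q ∈ Q}) (k : Fin 8), exprC (ψs qq) k ≤
          (match dec23 k with
            | UpdComp.decr => e k - 1
            | UpdComp.zero => e k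
            | UpdComp.minWith D => (insert k D).inf e) := by
        intro qq k
        have := g4 qq k
        rwa [upd_some_apply (g1 qq) k] at this
      have he10 : e1 0 = (insert 0 ({5} : Finset (Fin 8))).inf e := by
        have := he1 0
        rwa [show minU16dec23 0 = UpdComp.minWith {5} from by simp [minU16dec23]] at this
      have he1ne : e1 0 ≠ 0 := upd_some_cond hea 0 (by simp [decU])
      have hA : ∀ k : Fin 8, exprF φa k ≤ ea k := fun k => hlea k
      rw [exprE]
      intro k
      rw [Pi.add_apply, Pi.sup_apply, Pi.sup_apply, Pi.add_apply, iSup_apply]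
      -- helper inequalities
      have hS : ∀ k : Fin 8, k ≠ 1 → k ≠ 2 → (⨆ qq, exprC (ψs qq) k) ≤ e k := by
        intro k hk1 hk2
        refine iSup_le fun qq => ?_
        have := hes qq k
        rwa [show dec23 k = UpdComp.zero from by simp [dec23, hk1, hk2]] at this
      have hA0 : 1 + exprF φa 0 ≤ e1 0 := by
        refine one_add_le_of_ne he1ne ?_
        have := hA 0
        rwa [hea' 0, show decU 0 0 = UpdComp.decr from by simp [decU]] at this
      by_cases hk1 : k = 1
      · subst hk1
        rw [show unitE 1 1 + unitE 2 1 = 1 from by simp [unitE]]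
        refine one_add_le_of_ne (upd_some_cond h1 1 (by simp [minU16dec23])) ?_
        refine sup_le (sup_le ?_ ?_) ?_
        · have := hA 1
          rw [hea' 1, show decU 0 1 = UpdComp.zero from by simp [decU], he1 1,
            show minU16dec23 1 = UpdComp.decr from by simp [minU16dec23]] at this
          calc (unitE 0 + exprF φa) 1 = exprF φa 1 := by simp [unitE]
            _ ≤ e 1 - 1 := this
        · rw [show onlyAt 5 (1 + exprF φa 0) 1 = 0 from by simp [onlyAt]]
          exact zero_le
        · refine iSup_le fun qq => ?_
          have := hes qq 1
          rwa [show dec23 1 = UpdComp.decr from by simp [dec23]] at this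
      · by_cases hk2 : k = 2
        · subst hk2
          rw [show unitE 1 2 + unitE 2 2 = 1 from by simp [unitE]]
          refine one_add_le_of_ne (upd_some_cond h1 2 (by simp [minU16dec23])) ?_
          refine sup_le (sup_le ?_ ?_) ?_
          · have := hA 2
            rw [hea' 2, show decU 0 2 = UpdComp.zero from by simp [decU], he1 2,
              show minU16dec23 2 = UpdComp.decr from by simp [minU16dec23]] at this
            calc (unitE 0 + exprF φa) 2 = exprF φa 2 := by simp [unitE]
              _ ≤ e 2 - 1 := this
          · rw [show onlyAt 5 (1 + exprF φa 0) 2 = 0 from by simp [onlyAt]]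
            exact zero_le
          · refine iSup_le fun qq => ?_
            have := hes qq 2
            rwa [show dec23 2 = UpdComp.decr from by simp [dec23]] at this
        · rw [show unitE 1 k + unitE 2 k = 0 from by simp [unitE, hk1, hk2], zero_add]
          refine sup_le (sup_le ?_ ?_) (hS k hk1 hk2)
          · by_cases hk0 : k = 0
            · subst hk0
              rw [show (unitE 0 + exprF φa) 0 = 1 + exprF φa 0 from by simp [unitE]]
              refine hA0.trans ?_
              rw [he10]
              exact Finset.inf_le (by simp)
            · rw [show (unitE 0 + exprF φa) k = exprF φa k from by simp [unitE, hk0]]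
              have := hA k
              rwa [hea' k, show decU 0 k = UpdComp.zero from by simp [decU, hk0], he1 k,
                show minU16dec23 k = UpdComp.zero from by simp [minU16dec23, hk0, hk1, hk2]]
                at this
          · by_cases hk5 : k = 5
            · subst hk5
              rw [show onlyAt 5 (1 + exprF φa 0) 5 = 1 + exprF φa 0 from by simp [onlyAt]]
              refine hA0.trans ?_
              rw [he10]
              exact Finset.inf_le (by simp)
            · rw [show onlyAt 5 (1 + exprF φa 0) k = 0 from by simp [onlyAt, hk5]]
              exact zero_le

end Main

/-- winning budgets at `[p,Q]^ε_a` yield delayed strategy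
formulas of price at most `e`. -/
theorem win_implies_strategy_formula_delayed {Proc Act : Type}
    (Tr : Proc → Act → Proc → Prop) (τ : Act) (p : Proc) (Q : Set Proc) (e : Energy)
    (h : (specGame Tr τ).Win (.attD p Q) e) :
    ∃ χ : DFormula Act τ, StratD Tr τ (.attD p Q) e χ ∧ exprE χ ≤ e := by
  exact master Tr τ (.attD p Q) e h

end Spectroscopy
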